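/- Let H ∈ (0,1), let B^H be a fractional Brownian motion with Hurst parameter H on a probability space (Ω, F, P), let a ∈ ℝ, and set J_t := e^{−at} B^H_t + a ∫₀ᵗ e^{−as} B^H_s ds. Then for every t ≥ 0, the random variable J_t is Gaussian with mean 0 and variance V_t² := H ∫₀ᵗ z^{2H−1} ( e^{az − 2at} + e^{−az} ) dz; that is, the law of J_t is the Gaussian measure on ℝ with mean 0 and variance V_t². -/

import Mathlib

set_option maxHeartbeats 1000000


open MeasureTheory ProbabilityTheory Filter Set

noncomputable section

/-- The covariance function of fractional Brownian motion with Hurst parameter `H`: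
`ρ_H(t,s) = (t^{2H} + s^{2H} − |t−s|^{2H})/2`. -/
def fbmCov (H t s : ℝ) : ℝ := (t ^ (2 * H) + s ^ (2 * H) - |t - s| ^ (2 * H)) / 2

/-- A process `B` is a fractional Brownian motion with Hurst parameter `H` under the
probability measure `P` if `B 0 = 0`, almost all sample paths are continuous on `[0,∞)`,
and every finite linear combination `Σ cᵢ B_{tᵢ}` (with `tᵢ ≥ 0`) is a centered Gaussian
random variable with variance `Σᵢⱼ cᵢ cⱼ ρ_H(tᵢ,tⱼ)`. -/
structure IsFractionalBrownianMotion {Ω : Type*} [MeasurableSpace Ω] (P : Measure Ω)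
    (H : ℝ) (B : ℝ → Ω → ℝ) : Prop where
  init : ∀ ω, B 0 ω = 0
  cont : ∀ᵐ ω ∂P, ContinuousOn (fun t => B t ω) (Set.Ici 0)
  gaussian : ∀ (n : ℕ) (t : Fin n → ℝ) (c : Fin n → ℝ), (∀ i, 0 ≤ t i) →
    Measure.map (fun ω => ∑ i, c i * B (t i) ω) P =
      gaussianReal 0 (∑ i, ∑ j, c i * c j * fbmCov H (t i) (t j)).toNNReal

/-- The pathwise integral `J_t = e^{−at} B_t + a ∫₀ᵗ e^{−as} B_s ds`. -/
def fbmJ {Ω : Type*} (a : ℝ) (B : ℝ → Ω → ℝ) (t : ℝ) (ω : Ω) : ℝ :=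
  Real.exp (-(a * t)) * B t ω + a * ∫ s in (0:ℝ)..t, Real.exp (-(a * s)) * B s ω

end

section RiemannSums

/-- Quantitative Riemann sum error bound. -/
lemma riemann_sum_error {t : ℝ} (ht : 0 < t) {f : ℝ → ℝ} (hf : ContinuousOn f (Icc 0 t))
    {n : ℕ} (hn : 0 < n) {ε : ℝ} (hε : 0 ≤ ε)
    (hmod : ∀ x ∈ Icc (0:ℝ) t, ∀ y ∈ Icc (0:ℝ) t, |x - y| ≤ t / n → |f x - f y| ≤ ε) :
    |(∑ k ∈ Finset.range n, (t / n) * f ((k + 1) * (t / n))) - ∫ s in (0:ℝ)..t, f s| ≤ ε * t := by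
  have hδ : 0 < t / n := div_pos ht (by exact_mod_cast hn)
  set δ := t / n with hδdef
  have hpt : ∀ k : ℕ, k ≤ n → (k : ℝ) * δ ∈ Icc (0:ℝ) t := by
    intro k hk
    constructor
    · positivity
    · calc (k:ℝ) * δ ≤ n * δ := by
            apply mul_le_mul_of_nonneg_right _ hδ.le
            exact_mod_cast hk
        _ = t := by rw [hδdef]; field_simp [(Nat.cast_pos.mpr hn).ne']
  have hsub : ∀ k : ℕ, k < n → Icc ((k:ℝ)*δ) ((k+1)*δ) ⊆ Icc (0:ℝ) t := by
    intro k hk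
    apply Icc_subset_Icc (hpt k hk.le).1
    have : ((k:ℝ)+1) * δ = ((k+1 : ℕ) : ℝ) * δ := by push_cast; ring
    rw [this]
    exact (hpt (k+1) hk).2
  have hii : ∀ k < n, IntervalIntegrable f MeasureTheory.volume ((k:ℝ)*δ) (((k:ℕ)+1)*δ) := by
    intro k hk
    apply ContinuousOn.intervalIntegrable
    rw [Set.uIcc_of_le (by nlinarith [hδ] : (k:ℝ)*δ ≤ ((k:ℕ)+1)*δ)]
    exact hf.mono (hsub k hk)
  have hsplit : ∫ s in (0:ℝ)..t, f s = ∑ k ∈ Finset.range n, ∫ s in ((k:ℝ)*δ)..(((k:ℕ)+1)*δ), f s := by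
    have := intervalIntegral.sum_integral_adjacent_intervals (a := fun k : ℕ => (k:ℝ)*δ)
      (f := f) (μ := MeasureTheory.volume) (n := n) ?_
    · push_cast at this
      rw [this]
      norm_num
      congr 1
      rw [hδdef]; field_simp [(Nat.cast_pos.mpr hn).ne']
    · intro k hk
      have := hii k hk
      push_cast at this ⊢
      convert this using 2
  rw [hsplit, ← Finset.sum_sub_distrib]
  refine (Finset.abs_sum_le_sum_abs _ _).trans ?_
  have hbound : ∀ k ∈ Finset.range n,
      |(δ * f ((k + 1) * δ)) - ∫ s in ((k:ℝ)*δ)..(((k:ℕ)+1)*δ), f s| ≤ ε * δ := by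
    intro k hk
    rw [Finset.mem_range] at hk
    have hle : (k:ℝ)*δ ≤ ((k:ℕ)+1)*δ := by nlinarith [hδ]
    have hconst : δ * f ((k + 1) * δ) = ∫ s in ((k:ℝ)*δ)..(((k:ℕ)+1)*δ), f (((k:ℕ)+1) * δ) := by
      rw [intervalIntegral.integral_const, smul_eq_mul]
      push_cast
      ring_nf
    rw [hconst, ← intervalIntegral.integral_sub (intervalIntegrable_const) (hii k hk)]
    have key : ∀ s ∈ Set.uIoc ((k:ℝ)*δ) (((k:ℕ)+1)*δ),
        ‖f (((k:ℕ)+1) * δ) - f s‖ ≤ ε := by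
      intro s hs
      rw [Set.uIoc_of_le hle] at hs
      have hsI : s ∈ Icc (0:ℝ) t := hsub k hk ⟨hs.1.le, hs.2⟩
      have hcI : ((k:ℕ)+1) * δ ∈ Icc (0:ℝ) t := by
        have := (hpt (k+1) hk).2
        constructor
        · positivity
        · push_cast at this ⊢; linarith
      rw [Real.norm_eq_abs]
      apply hmod _ hcI _ hsI
      rw [abs_le]
      constructor <;> [linarith [hs.2]; linarith [hs.1]]
    have := intervalIntegral.norm_integral_le_of_norm_le_const key
    rw [Real.norm_eq_abs] at this
    refine this.trans ?_
    have : |((k:ℝ)+1)*δ - (k:ℝ)*δ| = δ := by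
      rw [show ((k:ℝ)+1)*δ - (k:ℝ)*δ = δ by ring, abs_of_pos hδ]
    push_cast at this ⊢
    rw [this]
  refine (Finset.sum_le_sum hbound).trans ?_
  rw [Finset.sum_const, Finset.card_range, nsmul_eq_mul]
  have h2 : (n:ℝ) * (ε * δ) = ε * t := by rw [hδdef]; field_simp [(Nat.cast_pos.mpr hn).ne']; try ring
  linarith [h2.le, h2.ge]


/-- Convergence of Riemann sums for a continuous function. -/
lemma riemann_sum_tendsto {t : ℝ} (ht : 0 < t) {f : ℝ → ℝ} (hf : ContinuousOn f (Icc 0 t)) :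
    Tendsto (fun n : ℕ => ∑ k ∈ Finset.range n, (t / n) * f ((k + 1) * (t / n))) atTop
      (nhds (∫ s in (0:ℝ)..t, f s)) := by
  rw [Metric.tendsto_atTop]
  intro ε hε
  set ε' := ε / (2 * (t + 1)) with hε'def
  have hε' : 0 < ε' := by positivity
  obtain ⟨δ, hδ, hδf⟩ := Metric.uniformContinuousOn_iff.mp
    (isCompact_Icc.uniformContinuousOn_of_continuous hf) ε' hε'
  obtain ⟨N, hN⟩ := exists_nat_gt (t / δ)
  refine ⟨max N 1, fun n hn => ?_⟩
  have hn1 : 1 ≤ n := le_trans (le_max_right N 1) hn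
  have hnN : N ≤ n := le_trans (le_max_left N 1) hn
  have hn0 : 0 < n := hn1
  have htn : t / n < δ := by
    rw [div_lt_iff₀ (by exact_mod_cast hn0)]
    rw [div_lt_iff₀ hδ] at hN
    calc t < N * δ := by linarith [hN]
      _ ≤ n * δ := by
        apply mul_le_mul_of_nonneg_right _ hδ.le
        exact_mod_cast hnN
      _ = δ * n := mul_comm _ _
  have key := riemann_sum_error ht hf hn0 hε'.le (fun x hx y hy hxy => by
    have := hδf x hx y hy (lt_of_le_of_lt (by rwa [Real.dist_eq]) htn)
    rw [Real.dist_eq] at this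
    exact this.le)
  rw [Real.dist_eq]
  refine lt_of_le_of_lt key ?_
  rw [hε'def]
  rw [div_mul_eq_mul_div, div_lt_iff₀ (by positivity)]
  nlinarith

/-- Continuity of the partial integral of a uniformly continuous function of two variables. -/
lemma riemann_sum2_tendsto {t : ℝ} (ht : 0 < t) {F : ℝ → ℝ → ℝ}
    (hF : ContinuousOn (fun p : ℝ × ℝ => F p.1 p.2) (Icc 0 t ×ˢ Icc 0 t)) :
    Tendsto (fun n : ℕ => ∑ k ∈ Finset.range n, ∑ l ∈ Finset.range n,
        ((t/n) * (t/n)) * F ((k+1)*(t/n)) ((l+1)*(t/n))) atTop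
      (nhds (∫ s in (0:ℝ)..t, ∫ r in (0:ℝ)..t, F s r)) := by
  have hsq : IsCompact (Icc (0:ℝ) t ×ˢ Icc (0:ℝ) t) := isCompact_Icc.prod isCompact_Icc
  have huc := Metric.uniformContinuousOn_iff.mp (hsq.uniformContinuousOn_of_continuous hF)
  -- continuity of slices
  have hslice : ∀ x ∈ Icc (0:ℝ) t, ContinuousOn (F x) (Icc 0 t) := by
    intro x hx
    have : ContinuousOn (fun r => (x, r)) (Icc (0:ℝ) t) :=
      (continuous_const.prodMk continuous_id).continuousOn
    exact hF.comp this (fun r hr => ⟨hx, hr⟩)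
  set g : ℝ → ℝ := fun s => ∫ r in (0:ℝ)..t, F s r with hgdef
  -- uniform modulus transfers from F to g
  have hgmod : ∀ δ > 0, ∀ ε'' > 0,
      (∀ p ∈ Icc (0:ℝ) t ×ˢ Icc (0:ℝ) t, ∀ q ∈ Icc (0:ℝ) t ×ˢ Icc (0:ℝ) t,
        dist p q < δ → dist ((fun p : ℝ × ℝ => F p.1 p.2) p) ((fun p : ℝ × ℝ => F p.1 p.2) q) < ε'') →
      ∀ x ∈ Icc (0:ℝ) t, ∀ y ∈ Icc (0:ℝ) t, |x - y| < δ → |g x - g y| ≤ ε'' * t := by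
    intro δ hδ ε'' hε'' hδf x hx y hy hxy
    have hix : IntervalIntegrable (F x) MeasureTheory.volume 0 t :=
      ContinuousOn.intervalIntegrable (by rw [Set.uIcc_of_le ht.le]; exact hslice x hx)
    have hiy : IntervalIntegrable (F y) MeasureTheory.volume 0 t :=
      ContinuousOn.intervalIntegrable (by rw [Set.uIcc_of_le ht.le]; exact hslice y hy)
    rw [hgdef]
    simp only
    rw [← intervalIntegral.integral_sub hix hiy]
    have := intervalIntegral.norm_integral_le_of_norm_le_const
      (C := ε'') (f := fun r => F x r - F y r) (a := (0:ℝ)) (b := t) ?_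
    · rw [Real.norm_eq_abs] at this
      refine this.trans ?_
      rw [show t - (0:ℝ) = t by ring, abs_of_pos ht]
    · intro r hr
      rw [Set.uIoc_of_le ht.le] at hr
      have hrI : r ∈ Icc (0:ℝ) t := ⟨hr.1.le, hr.2⟩
      have := hδf (x, r) ⟨hx, hrI⟩ (y, r) ⟨hy, hrI⟩ (by
        rw [Prod.dist_eq, max_lt_iff]
        constructor
        · rwa [Real.dist_eq]
        · simpa [Real.dist_eq] using hδ)
      rw [Real.dist_eq] at this
      exact le_of_lt this
  -- continuity of g
  have hgcont : ContinuousOn g (Icc 0 t) := by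
    intro x hx
    rw [Metric.continuousWithinAt_iff]
    intro ε hε
    have hε3 : 0 < ε / (t + 1) := by positivity
    obtain ⟨δ, hδ, hδf⟩ := huc (ε / (t + 1) / 2) (by positivity)
    refine ⟨δ, hδ, fun {y} hy hxy => ?_⟩
    have := hgmod δ hδ (ε / (t + 1) / 2) (by positivity) hδf y hy x hx (by rwa [Real.dist_eq] at hxy)
    rw [Real.dist_eq]
    calc |g y - g x| ≤ ε / (t + 1) / 2 * t := this
      _ < ε := by
        rw [div_div, div_mul_eq_mul_div, div_lt_iff₀ (by positivity : (0:ℝ) < (t+1)*2)]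
        nlinarith
  -- main estimate
  rw [Metric.tendsto_atTop]
  intro ε hε
  set ε' := ε / (2 * (t + 1) * (t + 1)) with hε'def
  have hε' : 0 < ε' := by positivity
  obtain ⟨δ, hδ, hδf⟩ := huc ε' hε'
  obtain ⟨N, hN⟩ := exists_nat_gt (t / δ)
  refine ⟨max N 1, fun n hn => ?_⟩
  have hn1 : 1 ≤ n := le_trans (le_max_right N 1) hn
  have hnN : N ≤ n := le_trans (le_max_left N 1) hn
  have hn0 : 0 < n := hn1
  have htn : t / n < δ := by
    rw [div_lt_iff₀ (by exact_mod_cast hn0)]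
    rw [div_lt_iff₀ hδ] at hN
    calc t < N * δ := by linarith [hN]
      _ ≤ n * δ := by
        apply mul_le_mul_of_nonneg_right _ hδ.le
        exact_mod_cast hnN
      _ = δ * n := mul_comm _ _
  have hδn : 0 < t / n := div_pos ht (by exact_mod_cast hn0)
  have hptI : ∀ k : ℕ, k < n → ((k:ℝ)+1) * (t/n) ∈ Icc (0:ℝ) t := by
    intro k hk
    constructor
    · positivity
    · have : ((k:ℝ)+1) ≤ (n:ℝ) := by exact_mod_cast hk
      calc ((k:ℝ)+1) * (t/n) ≤ (n:ℝ) * (t/n) := mul_le_mul_of_nonneg_right this hδn.le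
        _ = t := by field_simp
  -- inner Riemann sums close to g
  have hinner : ∀ k ∈ Finset.range n,
      |(∑ l ∈ Finset.range n, (t/n) * F ((k+1)*(t/n)) ((l+1)*(t/n))) - g ((k+1)*(t/n))| ≤ ε' * t := by
    intro k hk
    rw [Finset.mem_range] at hk
    have hpk := hptI k hk
    refine riemann_sum_error ht (hslice _ hpk) hn0 hε'.le ?_
    intro x hx y hy hxy
    have := hδf (((k:ℝ)+1)*(t/n), x) ⟨hpk, hx⟩ (((k:ℝ)+1)*(t/n), y) ⟨hpk, hy⟩ (by
      rw [Prod.dist_eq, max_lt_iff]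
      constructor
      · simpa [Real.dist_eq] using hδ
      · rw [Real.dist_eq]; exact lt_of_le_of_lt hxy htn)
    rw [Real.dist_eq] at this
    exact this.le
  -- Riemann sum of g close to integral
  have houter : |(∑ k ∈ Finset.range n, (t/n) * g ((k+1)*(t/n))) - ∫ s in (0:ℝ)..t, g s| ≤ (ε' * t) * t := by
    refine riemann_sum_error ht hgcont hn0 (by positivity) ?_
    intro x hx y hy hxy
    exact hgmod δ hδ ε' hε' hδf x hx y hy (lt_of_le_of_lt hxy htn)
  -- combine
  have hsum : ∀ k ∈ Finset.range n,
      ∑ l ∈ Finset.range n, ((t/n) * (t/n)) * F ((k+1)*(t/n)) ((l+1)*(t/n))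
      = (t/n) * ∑ l ∈ Finset.range n, (t/n) * F ((k+1)*(t/n)) ((l+1)*(t/n)) := by
    intro k _
    rw [Finset.mul_sum]
    congr 1; funext l; ring
  rw [Real.dist_eq]
  have step1 : |(∑ k ∈ Finset.range n, ∑ l ∈ Finset.range n, ((t/n) * (t/n)) * F ((k+1)*(t/n)) ((l+1)*(t/n)))
      - ∑ k ∈ Finset.range n, (t/n) * g ((k+1)*(t/n))| ≤ ε' * t * t := by
    rw [Finset.sum_congr rfl hsum, ← Finset.sum_sub_distrib]
    refine (Finset.abs_sum_le_sum_abs _ _).trans ?_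
    have : ∀ k ∈ Finset.range n,
        |(t/n) * (∑ l ∈ Finset.range n, (t/n) * F ((k+1)*(t/n)) ((l+1)*(t/n))) - (t/n) * g ((k+1)*(t/n))|
          ≤ (t/n) * (ε' * t) := by
      intro k hk
      rw [← mul_sub, abs_mul, abs_of_pos hδn]
      exact mul_le_mul_of_nonneg_left (hinner k hk) hδn.le
    refine (Finset.sum_le_sum this).trans ?_
    rw [Finset.sum_const, Finset.card_range, nsmul_eq_mul]
    have h2 : (n:ℝ) * ((t/n) * (ε' * t)) = ε' * t * t := by field_simp; try ring
    linarith [h2.le, h2.ge]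
  calc |(∑ k ∈ Finset.range n, ∑ l ∈ Finset.range n, ((t/n) * (t/n)) * F ((k+1)*(t/n)) ((l+1)*(t/n)))
      - ∫ s in (0:ℝ)..t, ∫ r in (0:ℝ)..t, F s r|
      ≤ ε' * t * t + (ε' * t) * t := by
        have := abs_sub_abs_le_abs_sub ((∑ k ∈ Finset.range n, ∑ l ∈ Finset.range n, ((t/n) * (t/n)) * F ((k+1)*(t/n)) ((l+1)*(t/n)))) (0:ℝ)
        have htri := abs_sub_le
          (∑ k ∈ Finset.range n, ∑ l ∈ Finset.range n, ((t/n) * (t/n)) * F ((k+1)*(t/n)) ((l+1)*(t/n)))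
          (∑ k ∈ Finset.range n, (t/n) * g ((k+1)*(t/n)))
          (∫ s in (0:ℝ)..t, ∫ r in (0:ℝ)..t, F s r)
        refine htri.trans ?_
        exact add_le_add step1 houter
    _ < ε := by
        rw [hε'def]
        have hpos : (0:ℝ) < 2*(t+1)*(t+1) := by positivity
        rw [div_mul_eq_mul_div, div_mul_eq_mul_div] at *
        rw [← add_div, div_lt_iff₀ hpos]
        nlinarith

end RiemannSums


section Analytic

variable {H : ℝ}

lemma fbmCov_symm (H t s : ℝ) : fbmCov H t s = fbmCov H s t := by
  unfold fbmCov
  rw [abs_sub_comm]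
  ring

lemma continuous_rpow_const (hq : (0:ℝ) ≤ q) : Continuous (fun x : ℝ => x ^ q) :=
  continuous_iff_continuousAt.2 fun x => Real.continuousAt_rpow_const x q (Or.inr hq)

lemma continuous_fbmCov (hH : 0 < H) : Continuous (fun p : ℝ × ℝ => fbmCov H p.1 p.2) := by
  have h := continuous_rpow_const (by linarith : (0:ℝ) ≤ 2*H)
  unfold fbmCov
  exact (((h.comp continuous_fst).add (h.comp continuous_snd)).sub
    (h.comp ((continuous_fst.sub continuous_snd).abs))).div_const 2

lemma fbmCov_zero_left (hH : 0 < H) {s : ℝ} (hs : 0 ≤ s) : fbmCov H 0 s = 0 := by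
  unfold fbmCov
  rw [Real.zero_rpow (by linarith), show (0:ℝ) - s = -s by ring, abs_neg, abs_of_nonneg hs]
  ring

lemma fbmCov_self (hH : 0 < H) (s : ℝ) : fbmCov H s s = s ^ (2*H) := by
  unfold fbmCov
  rw [sub_self, abs_zero, Real.zero_rpow (by linarith)]
  ring

/-- primitive of `u ^ (β-1) * exp (c*u)` -/
noncomputable def rpowExpInt (β c x : ℝ) : ℝ := ∫ u in (0:ℝ)..x, u ^ (β - 1) * Real.exp (c * u)

lemma rpowExpInt_intervalIntegrable (hβ : (0:ℝ) < β) (c x y : ℝ) :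
    IntervalIntegrable (fun u => u ^ (β - 1) * Real.exp (c * u)) MeasureTheory.volume x y :=
  (intervalIntegral.intervalIntegrable_rpow' (by linarith)).mul_continuousOn
    ((Real.continuous_exp.comp (continuous_const.mul continuous_id)).continuousOn)

lemma rpowExpInt_zero (β c : ℝ) : rpowExpInt β c 0 = 0 := by
  simp [rpowExpInt]

lemma rpowExpInt_continuousOn (hβ : (0:ℝ) < β) (c T : ℝ) (hT : 0 ≤ T) :
    ContinuousOn (rpowExpInt β c) (Icc 0 T) := by
  have := intervalIntegral.continuousOn_primitive_interval
    (a := 0) (b := T) (μ := MeasureTheory.volume)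
    (f := fun u => u ^ (β - 1) * Real.exp (c * u)) ?_
  · rw [uIcc_of_le hT] at this
    exact this
  · rw [uIcc_of_le hT, ← intervalIntegrable_iff_integrableOn_Icc_of_le hT]
    exact rpowExpInt_intervalIntegrable hβ c 0 T

lemma rpowExpInt_hasDerivAt (hβ : (0:ℝ) < β) (c : ℝ) {x : ℝ} (hx : 0 < x) :
    HasDerivAt (rpowExpInt β c) (x ^ (β - 1) * Real.exp (c * x)) x := by
  apply intervalIntegral.integral_hasDerivAt_right (rpowExpInt_intervalIntegrable hβ c 0 x)
  · refine ⟨Ioi 0, Ioi_mem_nhds hx, ?_⟩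
    apply ContinuousOn.aestronglyMeasurable _ measurableSet_Ioi
    intro y hy
    exact (((Real.continuousAt_rpow_const y _ (Or.inl (ne_of_gt hy))).mul
      ((Real.continuous_exp.comp (continuous_const.mul continuous_id)).continuousAt))).continuousWithinAt
  · exact (Real.continuousAt_rpow_const x _ (Or.inl hx.ne')).mul
      ((Real.continuous_exp.comp (continuous_const.mul continuous_id)).continuousAt)

/-- A function continuous on `[0,x]` with zero derivative on `(0,x)` and value `0` at `0`
vanishes at `x`. -/
lemma eq_zero_of_deriv_zero {G : ℝ → ℝ} {x : ℝ} (hx : 0 ≤ x)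
    (hcont : ContinuousOn G (Icc 0 x)) (h0 : G 0 = 0)
    (hderiv : ∀ y ∈ Ioo (0:ℝ) x, HasDerivAt G 0 y) : G x = 0 := by
  have := intervalIntegral.integral_eq_sub_of_hasDeriv_right_of_le hx hcont
    (f' := fun _ => (0:ℝ)) (fun y hy => (hderiv y hy).hasDerivWithinAt)
    intervalIntegrable_const
  simp only [intervalIntegral.integral_zero] at this
  linarith [this.symm, h0]

/-- The key primitive identity:
`2c ∫₀ˣ e^{-2cs} P_c(s) ds = P_{-c}(x) - e^{-2cx} P_c(x)`. -/
lemma rpowExpInt_key (hβ : (0:ℝ) < β) (c : ℝ) {x : ℝ} (hx : 0 ≤ x) :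
    2*c * ∫ s in (0:ℝ)..x, Real.exp (-(2*c)*s) * rpowExpInt β c s
      = rpowExpInt β (-c) x - Real.exp (-(2*c)*x) * rpowExpInt β c x := by
  have hPcont : ContinuousOn (rpowExpInt β c) (Icc 0 x) := rpowExpInt_continuousOn hβ c x hx
  have hint : IntervalIntegrable (fun s => Real.exp (-(2*c)*s) * rpowExpInt β c s)
      MeasureTheory.volume 0 x := by
    apply ContinuousOn.intervalIntegrable
    rw [uIcc_of_le hx]
    exact ((Real.continuous_exp.comp (continuous_const.mul continuous_id)).continuousOn).mul hPcont
  set G : ℝ → ℝ := fun y => 2*c * (∫ s in (0:ℝ)..y, Real.exp (-(2*c)*s) * rpowExpInt β c s)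
      - rpowExpInt β (-c) y + Real.exp (-(2*c)*y) * rpowExpInt β c y with hGdef
  have hGx : G x = 0 := by
    apply eq_zero_of_deriv_zero hx
    · have hprim : ContinuousOn (fun y => ∫ s in (0:ℝ)..y, Real.exp (-(2*c)*s) * rpowExpInt β c s)
          (Icc 0 x) := by
        have := intervalIntegral.continuousOn_primitive_interval (a := 0) (b := x)
          (μ := MeasureTheory.volume)
          (f := fun s => Real.exp (-(2*c)*s) * rpowExpInt β c s) ?_
        · rwa [uIcc_of_le hx] at this
        · rw [uIcc_of_le hx, ← intervalIntegrable_iff_integrableOn_Icc_of_le hx]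
          exact hint
      exact ((continuousOn_const.mul hprim).sub (rpowExpInt_continuousOn hβ (-c) x hx)).add
        (((Real.continuous_exp.comp (continuous_const.mul continuous_id)).continuousOn).mul hPcont)
    · simp [hGdef, rpowExpInt_zero]
    · intro y hy
      have hPder := rpowExpInt_hasDerivAt hβ c hy.1
      have hPder' := rpowExpInt_hasDerivAt hβ (-c) hy.1
      have hIder : HasDerivAt (fun z => ∫ s in (0:ℝ)..z, Real.exp (-(2*c)*s) * rpowExpInt β c s)
          (Real.exp (-(2*c)*y) * rpowExpInt β c y) y := by
        apply intervalIntegral.integral_hasDerivAt_right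
          (hint.mono_set ?_) ?_ ?_
        · rw [uIcc_of_le hy.1.le, uIcc_of_le hx]
          exact Icc_subset_Icc le_rfl hy.2.le
        · refine ⟨Ioo 0 x, Ioo_mem_nhds hy.1 hy.2, ?_⟩
          apply ContinuousOn.aestronglyMeasurable _ measurableSet_Ioo
          exact ((Real.continuous_exp.comp (continuous_const.mul continuous_id)).continuousOn).mul
            (hPcont.mono (Ioo_subset_Icc_self.trans (Icc_subset_Icc le_rfl le_rfl)))
        · exact (((Real.continuous_exp.comp (continuous_const.mul continuous_id)).continuousAt)).mul
            (hPcont.continuousAt (Icc_mem_nhds hy.1 hy.2))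
      have hEder : HasDerivAt (fun z => Real.exp (-(2*c)*z)) (-(2*c) * Real.exp (-(2*c)*y)) y := by
        have h0 : HasDerivAt (fun z : ℝ => -(2*c)*z) (-(2*c)) y := by
          simpa using (hasDerivAt_id y).const_mul (-(2*c))
        have h1 := (Real.hasDerivAt_exp (-(2*c)*y)).comp y h0
        simp only [Function.comp_def] at h1
        refine h1.congr_deriv ?_
        ring
      have hprod : HasDerivAt (fun z => Real.exp (-(2*c)*z) * rpowExpInt β c z)
          (-(2*c) * Real.exp (-(2*c)*y) * rpowExpInt β c y
            + Real.exp (-(2*c)*y) * (y ^ (β-1) * Real.exp (c*y))) y := hEder.mul hPder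
      have htotal := ((hIder.const_mul (2*c)).sub hPder').add hprod
      refine htotal.congr_deriv ?_
      have hexp : Real.exp (-(2*c)*y) * Real.exp (c*y) = Real.exp (-c*y) := by
        rw [← Real.exp_add]; ring_nf
      have : Real.exp (-(2*c)*y) * (y ^ (β-1) * Real.exp (c*y)) = y ^ (β-1) * Real.exp (-c*y) := by
        rw [← hexp]; ring
      rw [this]
      ring
  rw [hGdef] at hGx
  simp only at hGx
  linarith


lemma rpowExpInt_intervalIntegrable' (hβ : (0:ℝ) < β) (a u v : ℝ) :
    IntervalIntegrable (fun r => r ^ (β - 1) * Real.exp (-(a*r))) MeasureTheory.volume u v := by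
  simpa [neg_mul] using rpowExpInt_intervalIntegrable hβ (-a) u v

lemma exp_cont_mul (a : ℝ) : Continuous (fun r : ℝ => Real.exp (-(a*r))) :=
  Real.continuous_exp.comp ((continuous_const.mul continuous_id).neg)

lemma sub_subst_left (hβ : (0:ℝ) < β) (a : ℝ) {s : ℝ} (hs : 0 ≤ s) :
    ∫ r in (0:ℝ)..s, (s - r) ^ (β - 1) * Real.exp (-(a*r))
      = Real.exp (-(a*s)) * rpowExpInt β a s := by
  have h1 : ∀ r : ℝ, (s - r) ^ (β - 1) * Real.exp (-(a*r))
      = (fun u => u ^ (β - 1) * Real.exp (-(a*(s-u)))) (s - r) := by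
    intro r
    simp only [sub_sub_cancel]
  rw [intervalIntegral.integral_congr (g := fun r => (fun u => u ^ (β - 1) * Real.exp (-(a*(s-u)))) (s - r)) (fun r _ => h1 r)]
  rw [intervalIntegral.integral_comp_sub_left (fun u => u ^ (β - 1) * Real.exp (-(a*(s-u)))) s]
  rw [sub_self, sub_zero]
  rw [show (∫ u in (0:ℝ)..s, u ^ (β - 1) * Real.exp (-(a*(s-u))))
      = ∫ u in (0:ℝ)..s, Real.exp (-(a*s)) * (u ^ (β - 1) * Real.exp (a*u)) from
    intervalIntegral.integral_congr (fun u _ => by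
      have h2 : Real.exp (-(a*s)) * Real.exp (a*u) = Real.exp (-(a*(s-u))) := by
        rw [← Real.exp_add]; ring_nf
      rw [← h2]; ring)]
  rw [intervalIntegral.integral_const_mul]
  rfl

lemma sub_subst_right (hβ : (0:ℝ) < β) (a : ℝ) {s t : ℝ} (hst : s ≤ t) :
    ∫ r in s..t, (r - s) ^ (β - 1) * Real.exp (-(a*r))
      = Real.exp (-(a*s)) * rpowExpInt β (-a) (t - s) := by
  have h1 : ∀ r : ℝ, (r - s) ^ (β - 1) * Real.exp (-(a*r))
      = (fun u => u ^ (β - 1) * Real.exp (-(a*(u+s)))) (r - s) := by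
    intro r
    simp only [sub_add_cancel]
  rw [intervalIntegral.integral_congr (g := fun r => (fun u => u ^ (β - 1) * Real.exp (-(a*(u+s)))) (r - s)) (fun r _ => h1 r)]
  rw [intervalIntegral.integral_comp_sub_right (fun u => u ^ (β - 1) * Real.exp (-(a*(u+s)))) s]
  rw [sub_self]
  rw [show (∫ u in (0:ℝ)..(t-s), u ^ (β - 1) * Real.exp (-(a*(u+s))))
      = ∫ u in (0:ℝ)..(t-s), Real.exp (-(a*s)) * (u ^ (β - 1) * Real.exp ((-a)*u)) from
    intervalIntegral.integral_congr (fun u _ => by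
      have h2 : Real.exp (-(a*s)) * Real.exp ((-a)*u) = Real.exp (-(a*(u+s))) := by
        rw [← Real.exp_add]; ring_nf
      rw [← h2]; ring)]
  rw [intervalIntegral.integral_const_mul]
  rfl

/-- Integration by parts for `∫₀ᵗ e^{-ar} ρ(r,s) dr`. -/
lemma cov_integral (hH : H ∈ Set.Ioo (0:ℝ) 1) (a : ℝ) {t s : ℝ} (hs : s ∈ Icc 0 t) :
    a * ∫ r in (0:ℝ)..t, Real.exp (-(a*r)) * fbmCov H r s
      = -(Real.exp (-(a*t)) * fbmCov H t s)
        + H * (rpowExpInt (2*H) (-a) t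
          + Real.exp (-(a*s)) * (rpowExpInt (2*H) a s - rpowExpInt (2*H) (-a) (t-s))) := by
  obtain ⟨hs0, hst⟩ := hs
  have ht0 : 0 ≤ t := le_trans hs0 hst
  have hβ : (0:ℝ) < 2*H := by linarith [hH.1]
  have hβ1 : (-1:ℝ) < 2*H - 1 := by linarith [hH.1]
  set g : ℝ → ℝ := fun r => (-Real.exp (-(a*r))) * fbmCov H r s with hgdef
  have hgC : Continuous g :=
    ((exp_cont_mul a).neg).mul ((continuous_fbmCov hH.1).comp (continuous_id.prodMk continuous_const))
  have hi_rho : ∀ u v : ℝ, IntervalIntegrable (fun r => Real.exp (-(a*r)) * fbmCov H r s)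
      MeasureTheory.volume u v := fun u v =>
    (((exp_cont_mul a)).mul ((continuous_fbmCov hH.1).comp (continuous_id.prodMk continuous_const))).intervalIntegrable u v
  have hi_rpow : ∀ u v : ℝ, IntervalIntegrable (fun r => r ^ (2*H - 1) * Real.exp (-(a*r)))
      MeasureTheory.volume u v := rpowExpInt_intervalIntegrable' hβ a
  have hi_sml : IntervalIntegrable (fun r => (s - r) ^ (2*H - 1) * Real.exp (-(a*r)))
      MeasureTheory.volume 0 s := by
    have hf : IntervalIntegrable (fun u => u ^ (2*H - 1) * Real.exp (-(a*(s-u))))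
        MeasureTheory.volume s 0 :=
      (intervalIntegral.intervalIntegrable_rpow' hβ1).mul_continuousOn
        ((Real.continuous_exp.comp ((continuous_const.mul (continuous_const.sub continuous_id)).neg)).continuousOn)
    have := hf.comp_sub_left s
    simp only [sub_sub_cancel, sub_self, sub_zero] at this
    exact this
  have hi_smr : IntervalIntegrable (fun r => (r - s) ^ (2*H - 1) * Real.exp (-(a*r)))
      MeasureTheory.volume s t := by
    have hf : IntervalIntegrable (fun u => u ^ (2*H - 1) * Real.exp (-(a*(u+s))))
        MeasureTheory.volume 0 (t - s) :=
      (intervalIntegral.intervalIntegrable_rpow' hβ1).mul_continuousOn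
        ((Real.continuous_exp.comp ((continuous_const.mul (continuous_id.add continuous_const)).neg)).continuousOn)
    have := hf.comp_sub_right s
    simp only [sub_add_cancel, zero_add] at this
    exact this
  -- derivative on (0, s)
  have hder1 : ∀ r ∈ Ioo (0:ℝ) s, HasDerivAt g
      (a * (Real.exp (-(a*r)) * fbmCov H r s)
        - (H * (r ^ (2*H-1) * Real.exp (-(a*r))) + H * ((s - r) ^ (2*H-1) * Real.exp (-(a*r))))) r := by
    intro r hr
    have hr0 : 0 < r := hr.1
    have hrs : r < s := hr.2
    have hcov : ∀ r' : ℝ, r' < s →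
        fbmCov H r' s = (r' ^ (2*H) + s ^ (2*H) - (s - r') ^ (2*H)) / 2 := by
      intro r' hr'
      unfold fbmCov
      rw [abs_sub_comm, abs_of_pos (by linarith : (0:ℝ) < s - r')]
    have heq : g =ᶠ[nhds r]
        (fun r' => (-Real.exp (-(a*r'))) * ((r' ^ (2*H) + s ^ (2*H) - (s - r') ^ (2*H)) / 2)) := by
      filter_upwards [Iio_mem_nhds hrs] with r' hr'
      rw [hgdef]
      simp only
      rw [hcov r' hr']
    rw [heq.hasDerivAt_iff]
    have h1 : HasDerivAt (fun x : ℝ => x ^ (2*H)) (2*H * r^(2*H-1)) r :=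
      Real.hasDerivAt_rpow_const (Or.inl hr0.ne')
    have h2 : HasDerivAt (fun x : ℝ => s - x) (-1) r := (hasDerivAt_id r).const_sub s
    have h3 : HasDerivAt (fun x : ℝ => (s - x)^(2*H)) ((-1) * (2*H) * (s-r)^(2*H-1)) r :=
      h2.rpow_const (Or.inl (sub_ne_zero.mpr hrs.ne'))
    have hrho : HasDerivAt (fun x : ℝ => (x ^ (2*H) + s ^ (2*H) - (s - x) ^ (2*H)) / 2)
        ((2*H * r^(2*H-1) + 2*H * (s-r)^(2*H-1)) / 2) r := by
      have := ((h1.add_const (s ^ (2*H))).sub h3).div_const 2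
      refine this.congr_deriv ?_
      ring
    have hexp : HasDerivAt (fun x : ℝ => -Real.exp (-(a*x))) (a * Real.exp (-(a*r))) r := by
      have h0 : HasDerivAt (fun x : ℝ => -(a*x)) (-a) r := by
        exact ((hasDerivAt_id r).const_mul a).neg.congr_deriv (by ring)
      have h1' := (Real.hasDerivAt_exp (-(a*r))).comp r h0
      simp only [Function.comp_def] at h1'
      have := h1'.neg
      refine this.congr_deriv ?_
      ring
    have hprod := hexp.mul hrho
    refine hprod.congr_deriv ?_
    rw [hcov r hrs]
    ring
  -- derivative on (s, t)
  have hder2 : ∀ r ∈ Ioo s t, HasDerivAt g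
      (a * (Real.exp (-(a*r)) * fbmCov H r s)
        - (H * (r ^ (2*H-1) * Real.exp (-(a*r))) - H * ((r - s) ^ (2*H-1) * Real.exp (-(a*r))))) r := by
    intro r hr
    have hrs : s < r := hr.1
    have hr0 : 0 < r := lt_of_le_of_lt hs0 hrs
    have hcov : ∀ r' : ℝ, s < r' →
        fbmCov H r' s = (r' ^ (2*H) + s ^ (2*H) - (r' - s) ^ (2*H)) / 2 := by
      intro r' hr'
      unfold fbmCov
      rw [abs_of_pos (by linarith : (0:ℝ) < r' - s)]
    have heq : g =ᶠ[nhds r]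
        (fun r' => (-Real.exp (-(a*r'))) * ((r' ^ (2*H) + s ^ (2*H) - (r' - s) ^ (2*H)) / 2)) := by
      filter_upwards [Ioi_mem_nhds hrs] with r' hr'
      rw [hgdef]
      simp only
      rw [hcov r' hr']
    rw [heq.hasDerivAt_iff]
    have h1 : HasDerivAt (fun x : ℝ => x ^ (2*H)) (2*H * r^(2*H-1)) r :=
      Real.hasDerivAt_rpow_const (Or.inl hr0.ne')
    have h2 : HasDerivAt (fun x : ℝ => x - s) (1:ℝ) r := (hasDerivAt_id r).sub_const s
    have h3 : HasDerivAt (fun x : ℝ => (x - s)^(2*H)) (1 * (2*H) * (r-s)^(2*H-1)) r :=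
      h2.rpow_const (Or.inl (sub_ne_zero.mpr hrs.ne'))
    have hrho : HasDerivAt (fun x : ℝ => (x ^ (2*H) + s ^ (2*H) - (x - s) ^ (2*H)) / 2)
        ((2*H * r^(2*H-1) - 2*H * (r-s)^(2*H-1)) / 2) r := by
      have := ((h1.add_const (s ^ (2*H))).sub h3).div_const 2
      refine this.congr_deriv ?_
      ring
    have hexp : HasDerivAt (fun x : ℝ => -Real.exp (-(a*x))) (a * Real.exp (-(a*r))) r := by
      have h0 : HasDerivAt (fun x : ℝ => -(a*x)) (-a) r := by
        exact ((hasDerivAt_id r).const_mul a).neg.congr_deriv (by ring)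
      have h1' := (Real.hasDerivAt_exp (-(a*r))).comp r h0
      simp only [Function.comp_def] at h1'
      have := h1'.neg
      refine this.congr_deriv ?_
      ring
    have hprod := hexp.mul hrho
    refine hprod.congr_deriv ?_
    rw [hcov r hrs]
    ring
  -- FTC on [0, s]
  have hFTC1 := intervalIntegral.integral_eq_sub_of_hasDeriv_right_of_le hs0
    (hgC.continuousOn)
    (fun r hr => (hder1 r hr).hasDerivWithinAt)
    (((hi_rho 0 s).const_mul a).sub (((hi_rpow 0 s).const_mul H).add (hi_sml.const_mul H)))
  -- FTC on [s, t]
  have hFTC2 := intervalIntegral.integral_eq_sub_of_hasDeriv_right_of_le hst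
    (hgC.continuousOn)
    (fun r hr => (hder2 r hr).hasDerivWithinAt)
    (((hi_rho s t).const_mul a).sub (((hi_rpow s t).const_mul H).sub (hi_smr.const_mul H)))
  -- split the integrals in hFTC1
  rw [intervalIntegral.integral_sub ((hi_rho 0 s).const_mul a)
        (((hi_rpow 0 s).const_mul H).add (hi_sml.const_mul H)),
      intervalIntegral.integral_add ((hi_rpow 0 s).const_mul H) (hi_sml.const_mul H),
      intervalIntegral.integral_const_mul, intervalIntegral.integral_const_mul,
      intervalIntegral.integral_const_mul] at hFTC1
  rw [intervalIntegral.integral_sub ((hi_rho s t).const_mul a)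
        (((hi_rpow s t).const_mul H).sub (hi_smr.const_mul H)),
      intervalIntegral.integral_sub ((hi_rpow s t).const_mul H) (hi_smr.const_mul H),
      intervalIntegral.integral_const_mul, intervalIntegral.integral_const_mul,
      intervalIntegral.integral_const_mul] at hFTC2
  -- adjacency
  have hadj : (∫ r in (0:ℝ)..s, Real.exp (-(a*r)) * fbmCov H r s)
      + (∫ r in s..t, Real.exp (-(a*r)) * fbmCov H r s)
      = ∫ r in (0:ℝ)..t, Real.exp (-(a*r)) * fbmCov H r s :=
    intervalIntegral.integral_add_adjacent_intervals (hi_rho 0 s) (hi_rho s t)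
  have hadj2 : (∫ r in (0:ℝ)..s, r ^ (2*H-1) * Real.exp (-(a*r)))
      + (∫ r in s..t, r ^ (2*H-1) * Real.exp (-(a*r)))
      = rpowExpInt (2*H) (-a) t := by
    rw [intervalIntegral.integral_add_adjacent_intervals (hi_rpow 0 s) (hi_rpow s t)]
    unfold rpowExpInt
    apply intervalIntegral.integral_congr
    intro u _
    simp only [neg_mul]
  -- substitutions
  have hsubL := sub_subst_left hβ a hs0
  have hsubR := sub_subst_right hβ a hst
  -- boundary values
  have hg0 : g 0 = 0 := by
    simp only [hgdef]
    rw [fbmCov_zero_left hH.1 hs0]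
    ring
  have hgt : g t = -(Real.exp (-(a*t)) * fbmCov H t s) := by
    simp only [hgdef]
    ring
  -- combine everything
  rw [← hadj, mul_add]
  have e1 : a * ∫ r in (0:ℝ)..s, Real.exp (-(a*r)) * fbmCov H r s
      = (g s - g 0) + (H * ∫ r in (0:ℝ)..s, r ^ (2*H-1) * Real.exp (-(a*r)))
        + H * (∫ r in (0:ℝ)..s, (s - r) ^ (2*H-1) * Real.exp (-(a*r))) := by
    linarith [hFTC1]
  have e2 : a * ∫ r in s..t, Real.exp (-(a*r)) * fbmCov H r s
      = (g t - g s) + (H * ∫ r in s..t, r ^ (2*H-1) * Real.exp (-(a*r)))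
        - H * (∫ r in s..t, (r - s) ^ (2*H-1) * Real.exp (-(a*r))) := by
    linarith [hFTC2]
  rw [e1, e2, hsubL, hsubR, hg0, hgt]
  have := hadj2
  nlinarith [hadj2]


lemma exp_neg_hasDerivAt (a y : ℝ) :
    HasDerivAt (fun x : ℝ => -Real.exp (-(a*x))) (a * Real.exp (-(a*y))) y := by
  have h0 : HasDerivAt (fun x : ℝ => -(a*x)) (-a) y := by
    exact ((hasDerivAt_id y).const_mul a).neg.congr_deriv (by ring)
  have h1' := (Real.hasDerivAt_exp (-(a*y))).comp y h0
  simp only [Function.comp_def] at h1'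
  have := h1'.neg
  refine this.congr_deriv ?_
  ring

lemma int_exp_neg (a t : ℝ) : a * ∫ s in (0:ℝ)..t, Real.exp (-(a*s)) = 1 - Real.exp (-(a*t)) := by
  have h := intervalIntegral.integral_eq_sub_of_hasDerivAt
    (f := fun x : ℝ => -Real.exp (-(a*x))) (f' := fun x => a * Real.exp (-(a*x)))
    (a := 0) (b := t) (fun s _ => exp_neg_hasDerivAt a s)
    ((continuous_const.mul (exp_cont_mul a)).intervalIntegrable 0 t)
  rw [← intervalIntegral.integral_const_mul]
  rw [h]
  simp [Real.exp_zero]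
  ring

/-- The main variance identity. -/
lemma main_identity (hH : H ∈ Set.Ioo (0:ℝ) 1) (a : ℝ) {t : ℝ} (ht : 0 ≤ t) :
    Real.exp (-(a*t))^2 * fbmCov H t t
      + 2*a*Real.exp (-(a*t)) * (∫ s in (0:ℝ)..t, Real.exp (-(a*s)) * fbmCov H t s)
      + a^2 * (∫ s in (0:ℝ)..t, ∫ r in (0:ℝ)..t,
          Real.exp (-(a*s)) * Real.exp (-(a*r)) * fbmCov H s r)
      = H * (rpowExpInt (2*H) (-a) t + Real.exp (-(a*t))^2 * rpowExpInt (2*H) a t) := by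
  have hβ : (0:ℝ) < 2*H := by linarith [hH.1]
  have hβ1 : (-1:ℝ) < 2*H - 1 := by linarith [hH.1]
  have hexp2 : ∀ x : ℝ, Real.exp (-(a*x))^2 = Real.exp (-(2*a)*x) := by
    intro x
    rw [sq, ← Real.exp_add]
    ring_nf
  -- the middle integral
  have hmid : a * (∫ s in (0:ℝ)..t, Real.exp (-(a*s)) * fbmCov H t s)
      = -(Real.exp (-(a*t)) * fbmCov H t t)
        + H * (rpowExpInt (2*H) (-a) t
          + Real.exp (-(a*t)) * (rpowExpInt (2*H) a t - rpowExpInt (2*H) (-a) 0)) := by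
    have hsymm : (∫ s in (0:ℝ)..t, Real.exp (-(a*s)) * fbmCov H t s)
        = ∫ s in (0:ℝ)..t, Real.exp (-(a*s)) * fbmCov H s t :=
      intervalIntegral.integral_congr (fun s _ => by rw [fbmCov_symm])
    rw [hsymm]
    have := cov_integral hH a (t := t) (s := t) ⟨ht, le_refl t⟩
    rw [sub_self] at this
    exact this
  -- the inner integral of the double integral
  have hinner : ∀ s ∈ Icc (0:ℝ) t,
      a * (∫ r in (0:ℝ)..t, Real.exp (-(a*s)) * Real.exp (-(a*r)) * fbmCov H s r)
        = Real.exp (-(a*s)) * (-(Real.exp (-(a*t)) * fbmCov H t s)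
            + H * (rpowExpInt (2*H) (-a) t
              + Real.exp (-(a*s)) * (rpowExpInt (2*H) a s - rpowExpInt (2*H) (-a) (t-s)))) := by
    intro s hsI
    have hpull : (∫ r in (0:ℝ)..t, Real.exp (-(a*s)) * Real.exp (-(a*r)) * fbmCov H s r)
        = Real.exp (-(a*s)) * ∫ r in (0:ℝ)..t, Real.exp (-(a*r)) * fbmCov H r s := by
      rw [← intervalIntegral.integral_const_mul]
      exact intervalIntegral.integral_congr (fun r _ => by rw [fbmCov_symm]; ring)
    rw [hpull, ← cov_integral hH a hsI]
    ring
  -- integrability facts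
  have hcontP : ContinuousOn (rpowExpInt (2*H) a) (Icc 0 t) := rpowExpInt_continuousOn hβ a t ht
  have hcontP' : ContinuousOn (rpowExpInt (2*H) (-a)) (Icc 0 t) := rpowExpInt_continuousOn hβ (-a) t ht
  have hconttsub : ContinuousOn (fun s : ℝ => rpowExpInt (2*H) (-a) (t - s)) (Icc 0 t) := by
    apply hcontP'.comp (continuous_const.sub continuous_id).continuousOn
    intro s hs
    exact ⟨by simp [hs.2], by simp [hs.1]⟩
  -- simplify hmid
  rw [rpowExpInt_zero, sub_zero] at hmid
  -- key primitive identities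
  have hJ3 : 2*a*(∫ s in (0:ℝ)..t, Real.exp (-(2*a)*s) * rpowExpInt (2*H) a s)
      = rpowExpInt (2*H) (-a) t - Real.exp (-(a*t))^2 * rpowExpInt (2*H) a t := by
    have h := rpowExpInt_key hβ a ht
    rw [← hexp2 t] at h
    exact h
  have hJ4 : 2*a*(∫ s in (0:ℝ)..t, Real.exp (-(2*a)*s) * rpowExpInt (2*H) (-a) (t - s))
      = rpowExpInt (2*H) (-a) t - Real.exp (-(a*t))^2 * rpowExpInt (2*H) a t := by
    have h1 : ∀ s : ℝ, Real.exp (-(2*a)*s) * rpowExpInt (2*H) (-a) (t-s)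
        = (fun u => Real.exp (-(2*a)*(t-u)) * rpowExpInt (2*H) (-a) u) (t-s) := by
      intro s
      simp only [sub_sub_cancel]
    have hsub : (∫ s in (0:ℝ)..t, Real.exp (-(2*a)*s) * rpowExpInt (2*H) (-a) (t - s))
        = ∫ u in (0:ℝ)..t, Real.exp (-(2*a)*(t-u)) * rpowExpInt (2*H) (-a) u := by
      rw [intervalIntegral.integral_congr (fun s _ => h1 s),
        intervalIntegral.integral_comp_sub_left
          (fun u => Real.exp (-(2*a)*(t-u)) * rpowExpInt (2*H) (-a) u) t,
        sub_self, sub_zero]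
    have key := rpowExpInt_key hβ (-a) ht
    simp only [neg_neg] at key
    have h2 : ∀ u : ℝ, Real.exp (-(2*a)*(t-u))
        = Real.exp (-(a*t))^2 * Real.exp (-(2*(-a))*u) := by
      intro u
      rw [hexp2, ← Real.exp_add]
      congr 1
      ring
    have h3 : (∫ u in (0:ℝ)..t, Real.exp (-(2*a)*(t-u)) * rpowExpInt (2*H) (-a) u)
        = Real.exp (-(a*t))^2
          * ∫ u in (0:ℝ)..t, Real.exp (-(2*(-a))*u) * rpowExpInt (2*H) (-a) u := by
      rw [← intervalIntegral.integral_const_mul]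
      exact intervalIntegral.integral_congr (fun u _ => by rw [h2 u]; ring)
    have h4 : Real.exp (-(2*(-a))*t) * Real.exp (-(a*t))^2 = 1 := by
      rw [hexp2, ← Real.exp_add, show -(2*(-a))*t + -(2*a)*t = 0 by ring, Real.exp_zero]
    rw [hsub, h3]
    linear_combination (-(Real.exp (-(a*t))^2)) * key + (rpowExpInt (2*H) (-a) t) * h4
  have hq := int_exp_neg a t
  -- integrability of the four pieces
  have hI1 : IntervalIntegrable
      (fun s => (-(Real.exp (-(a*t)))) * (Real.exp (-(a*s)) * fbmCov H t s))
      MeasureTheory.volume 0 t :=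
    (continuous_const.mul ((exp_cont_mul a).mul
      ((continuous_fbmCov hH.1).comp (continuous_const.prodMk continuous_id)))).intervalIntegrable 0 t
  have hI2 : IntervalIntegrable
      (fun s => (H * rpowExpInt (2*H) (-a) t) * Real.exp (-(a*s)))
      MeasureTheory.volume 0 t :=
    (continuous_const.mul (exp_cont_mul a)).intervalIntegrable 0 t
  have hI3 : IntervalIntegrable
      (fun s => H * (Real.exp (-(2*a)*s) * rpowExpInt (2*H) a s)) MeasureTheory.volume 0 t := by
    apply ContinuousOn.intervalIntegrable
    rw [uIcc_of_le ht]
    exact continuousOn_const.mul (((Real.continuous_exp.comp (continuous_const.mul continuous_id)).continuousOn).mul hcontP)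
  have hI4 : IntervalIntegrable
      (fun s => (-H) * (Real.exp (-(2*a)*s) * rpowExpInt (2*H) (-a) (t - s)))
      MeasureTheory.volume 0 t := by
    apply ContinuousOn.intervalIntegrable
    rw [uIcc_of_le ht]
    exact continuousOn_const.mul (((Real.continuous_exp.comp (continuous_const.mul continuous_id)).continuousOn).mul hconttsub)
  -- split the outer integral of the right-hand sides
  have hSsplit : (∫ s in (0:ℝ)..t, Real.exp (-(a*s)) * (-(Real.exp (-(a*t)) * fbmCov H t s)
        + H * (rpowExpInt (2*H) (-a) t
          + Real.exp (-(a*s)) * (rpowExpInt (2*H) a s - rpowExpInt (2*H) (-a) (t-s)))))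
      = (-(Real.exp (-(a*t)))) * (∫ s in (0:ℝ)..t, Real.exp (-(a*s)) * fbmCov H t s)
        + ((H * rpowExpInt (2*H) (-a) t) * (∫ s in (0:ℝ)..t, Real.exp (-(a*s)))
        + (H * (∫ s in (0:ℝ)..t, Real.exp (-(2*a)*s) * rpowExpInt (2*H) a s)
        + (-H) * (∫ s in (0:ℝ)..t, Real.exp (-(2*a)*s) * rpowExpInt (2*H) (-a) (t-s)))) := by
    have hpt : ∀ s ∈ uIcc (0:ℝ) t,
        Real.exp (-(a*s)) * (-(Real.exp (-(a*t)) * fbmCov H t s)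
          + H * (rpowExpInt (2*H) (-a) t
            + Real.exp (-(a*s)) * (rpowExpInt (2*H) a s - rpowExpInt (2*H) (-a) (t-s))))
        = (-(Real.exp (-(a*t)))) * (Real.exp (-(a*s)) * fbmCov H t s)
          + ((H * rpowExpInt (2*H) (-a) t) * Real.exp (-(a*s))
          + (H * (Real.exp (-(2*a)*s) * rpowExpInt (2*H) a s)
          + (-H) * (Real.exp (-(2*a)*s) * rpowExpInt (2*H) (-a) (t-s)))) := by
      intro s _
      rw [← hexp2 s]
      ring
    rw [intervalIntegral.integral_congr hpt,
      intervalIntegral.integral_add hI1 (hI2.add (hI3.add hI4)),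
      intervalIntegral.integral_add hI2 (hI3.add hI4),
      intervalIntegral.integral_add hI3 hI4,
      intervalIntegral.integral_const_mul, intervalIntegral.integral_const_mul,
      intervalIntegral.integral_const_mul, intervalIntegral.integral_const_mul]
  -- rewrite the double integral
  have hD2 : a^2 * (∫ s in (0:ℝ)..t, ∫ r in (0:ℝ)..t,
        Real.exp (-(a*s)) * Real.exp (-(a*r)) * fbmCov H s r)
      = a * (∫ s in (0:ℝ)..t, Real.exp (-(a*s)) * (-(Real.exp (-(a*t)) * fbmCov H t s)
          + H * (rpowExpInt (2*H) (-a) t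
            + Real.exp (-(a*s)) * (rpowExpInt (2*H) a s - rpowExpInt (2*H) (-a) (t-s))))) := by
    have expand : a^2 * (∫ s in (0:ℝ)..t, ∫ r in (0:ℝ)..t,
          Real.exp (-(a*s)) * Real.exp (-(a*r)) * fbmCov H s r)
        = a * (∫ s in (0:ℝ)..t, a * ∫ r in (0:ℝ)..t,
            Real.exp (-(a*s)) * Real.exp (-(a*r)) * fbmCov H s r) := by
      rw [intervalIntegral.integral_const_mul]
      ring
    rw [expand]
    congr 1
    apply intervalIntegral.integral_congr
    intro s hsmem
    rw [uIcc_of_le ht] at hsmem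
    exact hinner s hsmem
  rw [hD2, hSsplit]
  linear_combination Real.exp (-(a*t)) * hmid + (H * rpowExpInt (2*H) (-a) t) * hq
    + (H/2) * hJ3 - (H/2) * hJ4


/-- The target variance expression equals the `rpowExpInt` form. -/
lemma variance_eq (hH : H ∈ Set.Ioo (0:ℝ) 1) (a : ℝ) {t : ℝ} (ht : 0 ≤ t) :
    H * ∫ z in (0:ℝ)..t, z ^ (2*H - 1) * (Real.exp (a*z - 2*a*t) + Real.exp (-(a*z)))
      = H * (rpowExpInt (2*H) (-a) t + Real.exp (-(a*t))^2 * rpowExpInt (2*H) a t) := by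
  have hβ : (0:ℝ) < 2*H := by linarith [hH.1]
  congr 1
  have i1 : IntervalIntegrable
      (fun z => Real.exp (-(a*t))^2 * (z ^ (2*H-1) * Real.exp (a*z)))
      MeasureTheory.volume 0 t := (rpowExpInt_intervalIntegrable hβ a 0 t).const_mul _
  have i2 : IntervalIntegrable (fun z => z ^ (2*H-1) * Real.exp (-(a*z)))
      MeasureTheory.volume 0 t := rpowExpInt_intervalIntegrable' hβ a 0 t
  have hpt : ∀ z ∈ uIcc (0:ℝ) t,
      z ^ (2*H - 1) * (Real.exp (a*z - 2*a*t) + Real.exp (-(a*z)))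
        = Real.exp (-(a*t))^2 * (z ^ (2*H-1) * Real.exp (a*z))
          + z ^ (2*H-1) * Real.exp (-(a*z)) := by
    intro z _
    have h1 : Real.exp (a*z - 2*a*t) = Real.exp (-(a*t))^2 * Real.exp (a*z) := by
      rw [sq, ← Real.exp_add, ← Real.exp_add]
      congr 1
      ring
    rw [h1]
    ring
  rw [intervalIntegral.integral_congr hpt, intervalIntegral.integral_add i1 i2,
    intervalIntegral.integral_const_mul]
  have hPm : rpowExpInt (2*H) (-a) t = ∫ z in (0:ℝ)..t, z ^ (2*H-1) * Real.exp (-(a*z)) := by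
    unfold rpowExpInt
    exact intervalIntegral.integral_congr (fun z _ => by simp only [neg_mul])
  rw [hPm]
  unfold rpowExpInt
  ring

end Analytic


section Prob

/-- partition points: `fbmPt t n 0 = t`, `fbmPt t n (k+1) = (k+1) t/n`. -/
noncomputable def fbmPt (t : ℝ) (n : ℕ) : Fin (n+1) → ℝ :=
  Fin.cons t (fun k => ((k:ℝ)+1)*(t/n))

/-- coefficients of the Gaussian approximation. -/
noncomputable def fbmCf (a t : ℝ) (n : ℕ) : Fin (n+1) → ℝ :=
  Fin.cons (Real.exp (-(a*t))) (fun k => a * ((t/n) * Real.exp (-(a*(((k:ℝ)+1)*(t/n))))))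

/-- Riemann sum approximations of `fbmJ`. -/
noncomputable def fbmX {Ω : Type*} (a t : ℝ) (B : ℝ → Ω → ℝ) (n : ℕ) (ω : Ω) : ℝ :=
  Real.exp (-(a*t)) * B t ω
    + a * ∑ k ∈ Finset.range n, (t/n) * (Real.exp (-(a*(((k:ℝ)+1)*(t/n)))) * B (((k:ℝ)+1)*(t/n)) ω)

/-- variance of `fbmX`. -/
noncomputable def fbmVar (H a t : ℝ) (n : ℕ) : ℝ :=
  ∑ i, ∑ j, fbmCf a t n i * fbmCf a t n j * fbmCov H (fbmPt t n i) (fbmPt t n j)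

lemma fbmPt_nonneg {t : ℝ} (ht : 0 ≤ t) (n : ℕ) : ∀ i, 0 ≤ fbmPt t n i := by
  intro i
  refine Fin.cases ?_ ?_ i
  · simpa [fbmPt] using ht
  · intro k
    simp only [fbmPt, Fin.cons_succ]
    have : (0:ℝ) ≤ t/n := div_nonneg ht (Nat.cast_nonneg n)
    positivity

lemma fbmX_law {Ω : Type*} [MeasurableSpace Ω] (P : Measure Ω) (H : ℝ) (B : ℝ → Ω → ℝ)
    (hB : IsFractionalBrownianMotion P H B) (a t : ℝ) (ht : 0 ≤ t) (n : ℕ) :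
    Measure.map (fbmX a t B n) P = gaussianReal 0 (fbmVar H a t n).toNNReal := by
  have h := hB.gaussian (n+1) (fbmPt t n) (fbmCf a t n) (fbmPt_nonneg ht n)
  rw [show fbmVar H a t n
      = ∑ i, ∑ j, fbmCf a t n i * fbmCf a t n j * fbmCov H (fbmPt t n i) (fbmPt t n j) from rfl,
    ← h]
  congr 1
  funext ω
  rw [Fin.sum_univ_succ]
  simp only [fbmPt, fbmCf, Fin.cons_zero, Fin.cons_succ]
  unfold fbmX
  rw [Finset.mul_sum,
    ← Fin.sum_univ_eq_sum_range
      (fun k => a * ((t/(n:ℝ)) * (Real.exp (-(a*(((k:ℝ)+1)*(t/(n:ℝ))))) * B (((k:ℝ)+1)*(t/(n:ℝ))) ω))) n]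
  congr 1
  apply Finset.sum_congr rfl
  intro k _
  ring


lemma fbmVar_tendsto {H : ℝ} (hH : H ∈ Set.Ioo (0:ℝ) 1) (a : ℝ) {t : ℝ} (ht : 0 < t) :
    Tendsto (fun n => fbmVar H a t n) atTop
      (nhds (Real.exp (-(a*t))^2 * fbmCov H t t
        + 2*a*Real.exp (-(a*t)) * (∫ s in (0:ℝ)..t, Real.exp (-(a*s)) * fbmCov H t s)
        + a^2 * (∫ s in (0:ℝ)..t, ∫ r in (0:ℝ)..t,
            Real.exp (-(a*s)) * Real.exp (-(a*r)) * fbmCov H s r))) := by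
  have hρ : Continuous (fun p : ℝ × ℝ => fbmCov H p.1 p.2) := continuous_fbmCov hH.1
  -- expansion of fbmVar as explicit Riemann sums
  have hexpand : ∀ n : ℕ, fbmVar H a t n
      = Real.exp (-(a*t))^2 * fbmCov H t t
        + 2*a*Real.exp (-(a*t)) * (∑ k ∈ Finset.range n,
            (t/n) * (Real.exp (-(a*(((k:ℝ)+1)*(t/n)))) * fbmCov H t (((k:ℝ)+1)*(t/n))))
        + a^2 * (∑ k ∈ Finset.range n, ∑ l ∈ Finset.range n,
            ((t/n)*(t/n)) * (Real.exp (-(a*(((k:ℝ)+1)*(t/n)))) * Real.exp (-(a*(((l:ℝ)+1)*(t/n))))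
              * fbmCov H (((k:ℝ)+1)*(t/n)) (((l:ℝ)+1)*(t/n)))) := by
    intro n
    unfold fbmVar
    simp only [Fin.sum_univ_succ, fbmPt, fbmCf, Fin.cons_zero, Fin.cons_succ]
    rw [Finset.sum_add_distrib]
    have e1 : ∑ k : Fin n,
        (a * ((t/(n:ℝ)) * Real.exp (-(a*(((k:ℝ)+1)*(t/(n:ℝ))))))) * Real.exp (-(a*t))
          * fbmCov H (((k:ℝ)+1)*(t/(n:ℝ))) t
        = ∑ k ∈ Finset.range n,
            (a * ((t/(n:ℝ)) * Real.exp (-(a*(((k:ℝ)+1)*(t/(n:ℝ))))))) * Real.exp (-(a*t))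
              * fbmCov H t (((k:ℝ)+1)*(t/(n:ℝ))) := by
      rw [← Fin.sum_univ_eq_sum_range (fun k : ℕ =>
        (a * ((t/(n:ℝ)) * Real.exp (-(a*(((k:ℝ)+1)*(t/(n:ℝ))))))) * Real.exp (-(a*t))
          * fbmCov H t (((k:ℝ)+1)*(t/(n:ℝ)))) n]
      exact Finset.sum_congr rfl (fun k _ => by rw [fbmCov_symm])
    rw [e1]
    have e2 : ∑ k : Fin n, Real.exp (-(a*t))
          * (a * ((t/(n:ℝ)) * Real.exp (-(a*(((k:ℝ)+1)*(t/(n:ℝ)))))))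
          * fbmCov H t (((k:ℝ)+1)*(t/(n:ℝ)))
        = ∑ k ∈ Finset.range n, Real.exp (-(a*t))
            * (a * ((t/(n:ℝ)) * Real.exp (-(a*(((k:ℝ)+1)*(t/(n:ℝ)))))))
            * fbmCov H t (((k:ℝ)+1)*(t/(n:ℝ))) :=
      Fin.sum_univ_eq_sum_range (fun k : ℕ => Real.exp (-(a*t))
        * (a * ((t/(n:ℝ)) * Real.exp (-(a*(((k:ℝ)+1)*(t/(n:ℝ)))))))
        * fbmCov H t (((k:ℝ)+1)*(t/(n:ℝ)))) n
    rw [e2]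
    have e3 : ∑ k : Fin n, ∑ l : Fin n,
          (a * ((t/(n:ℝ)) * Real.exp (-(a*(((k:ℝ)+1)*(t/(n:ℝ)))))))
            * (a * ((t/(n:ℝ)) * Real.exp (-(a*(((l:ℝ)+1)*(t/(n:ℝ)))))))
            * fbmCov H (((k:ℝ)+1)*(t/(n:ℝ))) (((l:ℝ)+1)*(t/(n:ℝ)))
        = ∑ k ∈ Finset.range n, ∑ l ∈ Finset.range n,
            (a * ((t/(n:ℝ)) * Real.exp (-(a*(((k:ℝ)+1)*(t/(n:ℝ)))))))
              * (a * ((t/(n:ℝ)) * Real.exp (-(a*(((l:ℝ)+1)*(t/(n:ℝ)))))))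
              * fbmCov H (((k:ℝ)+1)*(t/(n:ℝ))) (((l:ℝ)+1)*(t/(n:ℝ))) := by
      rw [← Fin.sum_univ_eq_sum_range (fun k : ℕ => ∑ l ∈ Finset.range n,
        (a * ((t/(n:ℝ)) * Real.exp (-(a*(((k:ℝ)+1)*(t/(n:ℝ)))))))
          * (a * ((t/(n:ℝ)) * Real.exp (-(a*(((l:ℝ)+1)*(t/(n:ℝ)))))))
          * fbmCov H (((k:ℝ)+1)*(t/(n:ℝ))) (((l:ℝ)+1)*(t/(n:ℝ)))) n]
      refine Finset.sum_congr rfl (fun k _ => ?_)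
      exact Fin.sum_univ_eq_sum_range (fun l : ℕ =>
        (a * ((t/(n:ℝ)) * Real.exp (-(a*(((k:ℝ)+1)*(t/(n:ℝ)))))))
          * (a * ((t/(n:ℝ)) * Real.exp (-(a*(((l:ℝ)+1)*(t/(n:ℝ)))))))
          * fbmCov H (((k:ℝ)+1)*(t/(n:ℝ))) (((l:ℝ)+1)*(t/(n:ℝ)))) n
    rw [e3]
    have hT : 2*a*Real.exp (-(a*t)) * (∑ k ∈ Finset.range n,
          (t/(n:ℝ)) * (Real.exp (-(a*(((k:ℝ)+1)*(t/(n:ℝ))))) * fbmCov H t (((k:ℝ)+1)*(t/(n:ℝ)))))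
        = (∑ k ∈ Finset.range n, Real.exp (-(a*t))
            * (a * ((t/(n:ℝ)) * Real.exp (-(a*(((k:ℝ)+1)*(t/(n:ℝ)))))))
            * fbmCov H t (((k:ℝ)+1)*(t/(n:ℝ))))
          + ∑ k ∈ Finset.range n,
            (a * ((t/(n:ℝ)) * Real.exp (-(a*(((k:ℝ)+1)*(t/(n:ℝ))))))) * Real.exp (-(a*t))
              * fbmCov H t (((k:ℝ)+1)*(t/(n:ℝ))) := by
      rw [Finset.mul_sum, ← Finset.sum_add_distrib]
      exact Finset.sum_congr rfl (fun k _ => by ring)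
    have hD : a^2 * (∑ k ∈ Finset.range n, ∑ l ∈ Finset.range n,
          ((t/(n:ℝ))*(t/(n:ℝ))) * (Real.exp (-(a*(((k:ℝ)+1)*(t/(n:ℝ)))))
            * Real.exp (-(a*(((l:ℝ)+1)*(t/(n:ℝ)))))
            * fbmCov H (((k:ℝ)+1)*(t/(n:ℝ))) (((l:ℝ)+1)*(t/(n:ℝ)))))
        = ∑ k ∈ Finset.range n, ∑ l ∈ Finset.range n,
            (a * ((t/(n:ℝ)) * Real.exp (-(a*(((k:ℝ)+1)*(t/(n:ℝ)))))))
              * (a * ((t/(n:ℝ)) * Real.exp (-(a*(((l:ℝ)+1)*(t/(n:ℝ)))))))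
              * fbmCov H (((k:ℝ)+1)*(t/(n:ℝ))) (((l:ℝ)+1)*(t/(n:ℝ))) := by
      rw [Finset.mul_sum]
      refine Finset.sum_congr rfl (fun k _ => ?_)
      rw [Finset.mul_sum]
      exact Finset.sum_congr rfl (fun l _ => by ring)
    rw [hT, hD]
    ring
  -- combine the tendsto statements
  have hcexp : Continuous (fun s : ℝ => Real.exp (-(a*s))) := exp_cont_mul a
  have T1 := riemann_sum_tendsto ht
    (f := fun s => Real.exp (-(a*s)) * fbmCov H t s)
    ((hcexp.mul (hρ.comp (continuous_const.prodMk continuous_id))).continuousOn)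
  have T2 := riemann_sum2_tendsto ht
    (F := fun s r => Real.exp (-(a*s)) * Real.exp (-(a*r)) * fbmCov H s r)
    ((((hcexp.comp continuous_fst).mul (hcexp.comp continuous_snd)).mul hρ).continuousOn)
  have hcomb := ((T1.const_mul (2*a*Real.exp (-(a*t)))).const_add
      (Real.exp (-(a*t))^2 * fbmCov H t t)).add (T2.const_mul (a^2))
  exact hcomb.congr (fun n => (hexpand n).symm)

end Prob


/-- For `J_t = e^{−at} B^H_t + a ∫₀ᵗ e^{−as} B^H_s ds` and `t ≥ 0`, the random variable `J_t`
is Gaussian with mean `0` and variance `V_t² = H ∫₀ᵗ z^{2H−1}(e^{az−2at} + e^{−az}) dz`;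
that is, the law of `J_t` is the Gaussian measure on `ℝ` with mean `0` and variance `V_t²`. -/
theorem fbmJ_law_gaussian
    {Ω : Type*} [MeasurableSpace Ω] (P : Measure Ω) [IsProbabilityMeasure P]
    (H : ℝ) (hH : H ∈ Set.Ioo (0:ℝ) 1)
    (B : ℝ → Ω → ℝ) (hB : IsFractionalBrownianMotion P H B)
    (a : ℝ) (t : ℝ) (ht : 0 ≤ t) :
    Measure.map (fun ω => fbmJ a B t ω) P
      = gaussianReal 0
          (H * ∫ z in (0:ℝ)..t,
            z ^ (2 * H - 1) * (Real.exp (a * z - 2 * a * t) + Real.exp (-(a * z)))).toNNReal := by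
  rcases ht.eq_or_lt with h0 | htpos
  · -- t = 0
    subst h0
    have hfun : (fun ω => fbmJ a B 0 ω) = fun _ => (0:ℝ) := by
      funext ω
      unfold fbmJ
      rw [intervalIntegral.integral_same, hB.init ω]
      simp
    rw [hfun, intervalIntegral.integral_same, mul_zero, Real.toNNReal_zero,
      gaussianReal_zero_var, Measure.map_const, measure_univ, one_smul]
  · -- t > 0
    have hmeasB : ∀ s : ℝ, 0 ≤ s → AEMeasurable (B s) P := by
      intro s hs
      have h := hB.gaussian 1 (fun _ => s) (fun _ => 1) (fun _ => hs)
      by_contra hnm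
      have hzero : Measure.map (fun ω => ∑ i : Fin 1, 1 * B s ω) P = 0 := by
        apply Measure.map_of_not_aemeasurable
        intro hmeas
        apply hnm
        have heq : (fun ω => ∑ i : Fin 1, 1 * B s ω) = B s := by
          funext ω
          simp
        rwa [heq] at hmeas
      rw [hzero] at h
      have h1 : (0 : Measure ℝ) univ = 1 := by
        rw [h]
        exact measure_univ
      simp at h1
    have hXmeas : ∀ n : ℕ, AEMeasurable (fbmX a t B n) P := by
      intro n
      apply AEMeasurable.add
      · exact (hmeasB t ht).const_mul _
      · apply AEMeasurable.const_mul
        apply Finset.aemeasurable_fun_sum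
        intro k _
        have hp : (0:ℝ) ≤ ((k:ℝ)+1)*(t/n) := by
          have : (0:ℝ) ≤ t/n := div_nonneg ht (Nat.cast_nonneg n)
          positivity
        exact ((hmeasB _ hp).const_mul _).const_mul _
    have hXtend : ∀ᵐ ω ∂P, Tendsto (fun n => fbmX a t B n ω) atTop (nhds (fbmJ a B t ω)) := by
      filter_upwards [hB.cont] with ω hcont
      have hf : ContinuousOn (fun s => Real.exp (-(a*s)) * B s ω) (Icc 0 t) :=
        ((exp_cont_mul a).continuousOn).mul (hcont.mono (fun x hx => hx.1))
      have hR := riemann_sum_tendsto htpos hf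
      unfold fbmJ fbmX
      exact (hR.const_mul a).const_add (Real.exp (-(a*t)) * B t ω)
    have hJmeas : AEMeasurable (fun ω => fbmJ a B t ω) P :=
      aemeasurable_of_tendsto_metrizable_ae atTop hXmeas hXtend
    set Vr : ℝ := Real.exp (-(a*t))^2 * fbmCov H t t
        + 2*a*Real.exp (-(a*t)) * (∫ s in (0:ℝ)..t, Real.exp (-(a*s)) * fbmCov H t s)
        + a^2 * (∫ s in (0:ℝ)..t, ∫ r in (0:ℝ)..t,
            Real.exp (-(a*s)) * Real.exp (-(a*r)) * fbmCov H s r) with hVr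
    have hvar : Tendsto (fun n => fbmVar H a t n) atTop (nhds Vr) := fbmVar_tendsto hH a htpos
    have hvten : Tendsto (fun n => (fbmVar H a t n).toNNReal) atTop (nhds Vr.toNNReal) :=
      (continuous_real_toNNReal.tendsto Vr).comp hvar
    let μn : ℕ → ProbabilityMeasure ℝ :=
      fun n => ⟨gaussianReal 0 (fbmVar H a t n).toNNReal, inferInstance⟩
    let μJ : ProbabilityMeasure ℝ :=
      ⟨Measure.map (fun ω => fbmJ a B t ω) P, Measure.isProbabilityMeasure_map hJmeas⟩
    let μG : ProbabilityMeasure ℝ := ⟨gaussianReal 0 Vr.toNNReal, inferInstance⟩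
    have hlim1 : Tendsto μn atTop (nhds μJ) := by
      rw [MeasureTheory.ProbabilityMeasure.tendsto_iff_forall_integral_tendsto]
      intro f
      have h1 : ∀ n, ∫ x, f x ∂(μn n : Measure ℝ) = ∫ ω, f (fbmX a t B n ω) ∂P := by
        intro n
        have hc : (μn n : Measure ℝ) = Measure.map (fbmX a t B n) P := by
          show gaussianReal 0 (fbmVar H a t n).toNNReal = _
          rw [fbmX_law P H B hB a t ht n]
        rw [hc, integral_map (hXmeas n) f.continuous.aestronglyMeasurable]
      have h2 : ∫ x, f x ∂(μJ : Measure ℝ) = ∫ ω, f (fbmJ a B t ω) ∂P := by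
        show ∫ x, f x ∂(Measure.map (fun ω => fbmJ a B t ω) P) = _
        rw [integral_map hJmeas f.continuous.aestronglyMeasurable]
      rw [h2]
      simp only [h1]
      exact tendsto_integral_of_dominated_convergence (fun _ => ‖f‖)
        (fun n => (f.continuous.measurable.comp_aemeasurable (hXmeas n)).aestronglyMeasurable)
        (integrable_const _)
        (fun n => Eventually.of_forall (fun ω => f.norm_coe_le_norm _))
        (hXtend.mono fun ω hω => (f.continuous.tendsto _).comp hω)
    have hgauss_int : ∀ (w : NNReal) (f : BoundedContinuousFunction ℝ ℝ),
        ∫ x, f x ∂(gaussianReal 0 w) = ∫ x, f (Real.sqrt w * x) ∂(gaussianReal 0 1) := by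
      intro w f
      have hmap : Measure.map (fun x => Real.sqrt w * x) (gaussianReal 0 1) = gaussianReal 0 w := by
        rw [gaussianReal_map_const_mul (Real.sqrt w)]
        congr 1
        · simp
        · ext
          simp [Real.sq_sqrt w.coe_nonneg]
      rw [← hmap,
        integral_map (measurable_const_mul _).aemeasurable f.continuous.aestronglyMeasurable]
    have hlim2 : Tendsto μn atTop (nhds μG) := by
      rw [MeasureTheory.ProbabilityMeasure.tendsto_iff_forall_integral_tendsto]
      intro f
      have hμn : ∀ n, ∫ x, f x ∂(μn n : Measure ℝ)
          = ∫ x, f (Real.sqrt ((fbmVar H a t n).toNNReal) * x) ∂(gaussianReal 0 1) := by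
        intro n
        show ∫ x, f x ∂(gaussianReal 0 (fbmVar H a t n).toNNReal) = _
        rw [hgauss_int]
      have hμG : ∫ x, f x ∂(μG : Measure ℝ)
          = ∫ x, f (Real.sqrt (Vr.toNNReal) * x) ∂(gaussianReal 0 1) := by
        show ∫ x, f x ∂(gaussianReal 0 Vr.toNNReal) = _
        rw [hgauss_int]
      rw [hμG]
      simp only [hμn]
      apply tendsto_integral_of_dominated_convergence (fun _ => ‖f‖)
      · intro n
        exact (f.continuous.comp (continuous_const.mul continuous_id)).aestronglyMeasurable
      · exact integrable_const _
      · intro n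
        exact Eventually.of_forall (fun x => f.norm_coe_le_norm _)
      · apply Eventually.of_forall
        intro x
        have hs : Tendsto (fun n => Real.sqrt ((fbmVar H a t n).toNNReal) * x) atTop
            (nhds (Real.sqrt (Vr.toNNReal) * x)) :=
          Tendsto.mul_const x
            ((Real.continuous_sqrt.tendsto _).comp (NNReal.tendsto_coe.mpr hvten))
        exact (f.continuous.tendsto _).comp hs
    have huniq : μJ = μG := tendsto_nhds_unique hlim1 hlim2
    have hM : Measure.map (fun ω => fbmJ a B t ω) P = gaussianReal 0 Vr.toNNReal :=
      congrArg (fun μ : ProbabilityMeasure ℝ => (μ : Measure ℝ)) huniq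
    rw [hM]
    have hid : Vr = H * ∫ z in (0:ℝ)..t,
        z ^ (2 * H - 1) * (Real.exp (a * z - 2 * a * t) + Real.exp (-(a * z))) := by
      rw [hVr, main_identity hH a ht, ← variance_eq hH a ht]
    rw [hid]
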